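/- Consider a conjunctive quantifier-free dynamic program (all update formulas are conjunctions of atoms, no variable repeated within an atom) purportedly maintaining the query 'U ≠ ∅' under element deletions. Then for every relation symbol R of deletion depth k and every state S in which U contains at least k+1 elements and which is reachable correctly, R must contain every diverse k'-tuple over U (where k' ≤ k is the arity of R), i.e., every tuple of pairwise distinct elements of U. -/

import Mathlib

/-- A relational atom over the auxiliary schema, with variables from `Fin n`. -/
structure CQAtom (Raux : Type) (ar : Raux → ℕ) (n : ℕ) where
  sym : Raux
  ι : Fin (ar sym) → Fin n

/-- A conjunctive quantifier-free deletion-update program: for every auxiliary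
relation `R`, a conjunction (list) of atoms over the variables `u, y_1, ..., y_{ar R}`
(variable `0` is the deleted element `u`). -/
structure CQDelProg (Raux : Type) (ar : Raux → ℕ) where
  delFormula : ∀ R : Raux, List (CQAtom Raux ar (ar R + 1))

/-- The deletion dependency graph: an edge `(R, R')` whenever `R'` occurs in the
deletion-update formula of `R`. -/
def DelEdge {Raux : Type} {ar : Raux → ℕ} (P : CQDelProg Raux ar)
    (R R' : Raux) : Prop :=
  ∃ a ∈ P.delFormula R, a.sym = R'

/-- Paths of length `k` from `Q` in the deletion dependency graph; the deletion depth
of `R` is the least `k` with `Reaches P Q k R`. -/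
inductive Reaches {Raux : Type} {ar : Raux → ℕ} (P : CQDelProg Raux ar) (Q : Raux) :
    ℕ → Raux → Prop where
  | zero : Reaches P Q 0 Q
  | succ {k : ℕ} {R R' : Raux} : Reaches P Q k R → DelEdge P R R' →
      Reaches P Q (k + 1) R'

/-- A state: the unary input relation `U` and the auxiliary database. -/
structure CState (X : Type) (Raux : Type) (ar : Raux → ℕ) where
  U : Set X
  aux : ∀ R, (Fin (ar R) → X) → Prop

/-- Deleting the element `a` from `U`: each auxiliary relation is recomputed by its
conjunctive update formula, evaluated in the old state with `a` as the parameter `u`. -/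
def stepDel {X Raux : Type} {ar : Raux → ℕ} (P : CQDelProg Raux ar)
    (st : CState X Raux ar) (a : X) : CState X Raux ar where
  U := st.U \ {a}
  aux R w := ∀ at' ∈ P.delFormula R, st.aux at'.sym (fun i => (Fin.cons a w : Fin (ar R + 1) → X) (at'.ι i))

/-- Running a sequence of deletions. -/
def runDel {X Raux : Type} {ar : Raux → ℕ} (P : CQDelProg Raux ar)
    (st : CState X Raux ar) (ds : List X) : CState X Raux ar :=
  ds.foldl (stepDel P) st

/-- The value of the (0-ary) query relation `Q`. -/
def Qholds {X Raux : Type} {ar : Raux → ℕ} (Q : Raux) (st : CState X Raux ar) : Prop :=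
  ∀ w : Fin (ar Q) → X, st.aux Q w

/-- **Key inductive invariant.** Suppose the conjunctive quantifier-free program `P`
(no variable repeated within an atom) correctly maintains the query "`U` is nonempty"
from the state `st` under all honest deletion sequences. Then for every auxiliary
relation symbol `R` of deletion depth (at most) `k`, if `U` contains at least `k + 1`
elements, `R` contains every diverse tuple over `U`. -/
lemma embed_extend {α β γ : Type*} [Fintype α] [Fintype β] [Fintype γ]
    (e : α ↪ β) (f : α ↪ γ) (h : Fintype.card β ≤ Fintype.card γ) :
    ∃ g : β ↪ γ, ∀ a, g (e a) = f a := by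
  classical
  have h1 : Fintype.card {b // b ∉ Set.range e} ≤ Fintype.card {c // c ∉ Set.range f} := by
    have he : Fintype.card {b // b ∈ Set.range e} = Fintype.card α :=
      Fintype.card_congr (Equiv.ofInjective e e.injective).symm
    have hf : Fintype.card {c // c ∈ Set.range f} = Fintype.card α :=
      Fintype.card_congr (Equiv.ofInjective f f.injective).symm
    rw [Fintype.card_subtype_compl, Fintype.card_subtype_compl, he, hf]
    omega
  obtain ⟨g₀⟩ := Function.Embedding.nonempty_of_card_le h1
  refine ⟨⟨fun b => if hb : b ∈ Set.range e then f hb.choose else (g₀ ⟨b, hb⟩).1, ?_⟩, ?_⟩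
  · intro b1 b2 heq
    dsimp only at heq
    split_ifs at heq with hb1 hb2 hb2
    · have := f.injective heq
      rw [← hb1.choose_spec, ← hb2.choose_spec, this]
    · exact absurd ⟨_, heq⟩ (g₀ ⟨b2, hb2⟩).2
    · exact absurd ⟨_, heq.symm⟩ (g₀ ⟨b1, hb1⟩).2
    · have : g₀ ⟨b1, hb1⟩ = g₀ ⟨b2, hb2⟩ := Subtype.ext heq
      simpa using g₀.injective this
  · intro a
    have ha : e a ∈ Set.range e := ⟨a, rfl⟩
    change (dite (e a ∈ Set.range e) (fun hb => f hb.choose) (fun hb => (g₀ ⟨e a, hb⟩).1)) = f a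
    rw [dif_pos ha]
    congr 1
    exact e.injective ha.choose_spec

lemma reaches_ar_le {Raux : Type} {ar : Raux → ℕ} (P : CQDelProg Raux ar) (Q : Raux)
    (hQ : ar Q = 0)
    (hnorep : ∀ (R : Raux) (a : CQAtom Raux ar (ar R + 1)),
      a ∈ P.delFormula R → Function.Injective a.ι)
    {k : ℕ} {R : Raux} (h : Reaches P Q k R) : ar R ≤ k := by
  induction h with
  | zero => omega
  | succ h e ih =>
    obtain ⟨a, ha, hs⟩ := e
    subst hs
    have := Fintype.card_le_of_injective _ (hnorep _ a ha)
    simp only [Fintype.card_fin] at this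
    omega

theorem cq_diverse_invariant (X Raux : Type) (ar : Raux → ℕ)
    (P : CQDelProg Raux ar) (Q : Raux) (hQ : ar Q = 0)
    (hnorep : ∀ (R : Raux) (a : CQAtom Raux ar (ar R + 1)),
      a ∈ P.delFormula R → Function.Injective a.ι)
    (st : CState X Raux ar)
    (hcorrect : ∀ ds : List X, ds.Nodup → (∀ x ∈ ds, x ∈ st.U) →
      (Qholds Q (runDel P st ds) ↔ (runDel P st ds).U.Nonempty))
    (R : Raux) (k : ℕ) (hreach : Reaches P Q k R)
    (hbig : ∃ T : Finset X, ↑T ⊆ st.U ∧ T.card = k + 1) :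
    ∀ w : Fin (ar R) → X, Function.Injective w → (∀ i, w i ∈ st.U) →
      st.aux R w := by
  classical
  have key : ∀ (k : ℕ) (R : Raux), Reaches P Q k R →
      ∀ st : CState X Raux ar,
      (∀ ds : List X, ds.Nodup → (∀ x ∈ ds, x ∈ st.U) →
        (Qholds Q (runDel P st ds) ↔ (runDel P st ds).U.Nonempty)) →
      (∃ T : Finset X, ↑T ⊆ st.U ∧ T.card = k + 1) →
      ∀ w : Fin (ar R) → X, Function.Injective w → (∀ i, w i ∈ st.U) →
        st.aux R w := by
    intro k R hreach
    induction hreach with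
    | zero =>
      intro st hc hb w hw hwU
      obtain ⟨T, hT, hTcard⟩ := hb
      have hne : st.U.Nonempty := by
        have : T.Nonempty := Finset.card_pos.mp (by omega)
        obtain ⟨t, ht⟩ := this
        exact ⟨t, hT ht⟩
      have hQh : Qholds Q st := (hc [] (by simp) (by simp)).mpr hne
      exact hQh w
    | @succ k R R' h1 h2 ih =>
      intro st hc hb w hw hwU
      obtain ⟨a, ha, hsym⟩ := h2
      subst hsym
      obtain ⟨T, hT, hTcard⟩ := hb
      have hnk : ar R ≤ k := reaches_ar_le P Q hQ hnorep h1
      set W : Finset X := Finset.image w Finset.univ with hW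
      set S : Finset X := T ∪ W with hS
      have hSU : ∀ x ∈ S, x ∈ st.U := by
        intro x hx
        rcases Finset.mem_union.mp hx with h | h
        · exact hT h
        · obtain ⟨i, _, rfl⟩ := Finset.mem_image.mp h
          exact hwU i
      have hScard : k + 2 ≤ S.card := by
        have := Finset.card_le_card (show T ⊆ S from Finset.subset_union_left)
        omega
      have hwS : ∀ i, w i ∈ S := fun i =>
        Finset.mem_union_right _ (Finset.mem_image.mpr ⟨i, Finset.mem_univ _, rfl⟩)
      let e : Fin (ar a.sym) ↪ Fin (ar R + 1) := ⟨a.ι, hnorep R a ha⟩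
      let f : Fin (ar a.sym) ↪ S := ⟨fun i => ⟨w i, hwS i⟩, fun i j hij => hw (congrArg Subtype.val hij)⟩
      have hcard : Fintype.card (Fin (ar R + 1)) ≤ Fintype.card S := by
        simp only [Fintype.card_fin, Fintype.card_coe]
        omega
      obtain ⟨g, hg⟩ := embed_extend e f hcard
      set u : X := (g 0).1 with hu
      set v : Fin (ar R) → X := fun i => (g i.succ).1 with hv
      have hcons : ∀ j : Fin (ar R + 1), (Fin.cons u v : Fin (ar R + 1) → X) j = (g j).1 := by
        intro j
        refine Fin.cases ?_ ?_ j
        · rfl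
        · intro i; rfl
      have huU : u ∈ st.U := hSU _ (g 0).2
      have huS : u ∈ S := (g 0).2
      have hvinj : Function.Injective v := by
        intro i j hij
        have : g i.succ = g j.succ := Subtype.ext hij
        exact Fin.succ_injective _ (g.injective this)
      have hvU : ∀ i, v i ∈ st.U \ {u} := by
        intro i
        refine ⟨hSU _ (g i.succ).2, ?_⟩
        simp only [Set.mem_singleton_iff]
        intro hcontra
        have : g i.succ = g 0 := Subtype.ext hcontra
        exact Fin.succ_ne_zero i (g.injective this)
      -- correctness for the next state
      have hc' : ∀ ds : List X, ds.Nodup → (∀ x ∈ ds, x ∈ (stepDel P st u).U) →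
          (Qholds Q (runDel P (stepDel P st u) ds) ↔ (runDel P (stepDel P st u) ds).U.Nonempty) := by
        intro ds hnd hmem
        have hnotin : u ∉ ds := by
          intro hin
          exact (hmem u hin).2 rfl
        have := hc (u :: ds) (List.nodup_cons.mpr ⟨hnotin, hnd⟩) ?_
        · exact this
        · intro x hx
          rcases List.mem_cons.mp hx with rfl | hx
          · exact huU
          · exact (hmem x hx).1
      -- size for the next state
      have hb' : ∃ T' : Finset X, ↑T' ⊆ (stepDel P st u).U ∧ T'.card = k + 1 := by
        have hcard' : k + 1 ≤ (S.erase u).card := by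
          rw [Finset.card_erase_of_mem huS]
          omega
        obtain ⟨T', hT'sub, hT'card⟩ := Finset.exists_subset_card_eq hcard'
        refine ⟨T', ?_, hT'card⟩
        intro x hx
        have hx' := hT'sub hx
        exact ⟨hSU x (Finset.mem_of_mem_erase hx'), Finset.ne_of_mem_erase hx'⟩
      have hRv : (stepDel P st u).aux R v := ih (stepDel P st u) hc' hb' v hvinj
        (fun i => (hvU i))
      have hfin := hRv a ha
      have heq : (fun i => (Fin.cons u v : Fin (ar R + 1) → X) (a.ι i)) = w := by
        funext i
        rw [hcons (a.ι i)]
        have : g (e i) = f i := hg i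
        exact congrArg Subtype.val this
      rwa [heq] at hfin
  exact key k R hreach st hcorrect hbig
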